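/- Fusion for Sacks forcing: if (a_n)_{n∈ω} is a sequence of perfect trees with a_{n+1} ≤_n a_n for all n (where q ≤_n p means q ⊆ p and spl(q,n) = spl(p,n)), then a_ω = ⋂_{n∈ω} a_n is a perfect tree and a_ω ≤_n a_n for every n. -/

import Mathlib

/-- A tree on ω^{<ω}: a set of finite sequences closed under initial segments. -/
def IsTree (T : Set (List ℕ)) : Prop :=
  ∀ s t : List ℕ, s <+: t → t ∈ T → s ∈ T

/-- `s` splits in `T`: at least two immediate successors of `s` lie in `T`. -/
def Splits (T : Set (List ℕ)) (s : List ℕ) : Prop :=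
  ∃ n m : ℕ, n ≠ m ∧ s ++ [n] ∈ T ∧ s ++ [m] ∈ T

/-- Perfect (Sacks) tree: nonempty tree in which every node has a splitting extension. -/
def IsPerfect (T : Set (List ℕ)) : Prop :=
  IsTree T ∧ T.Nonempty ∧ ∀ s ∈ T, ∃ t ∈ T, s <+: t ∧ Splits T t

/-- Restriction of a tree at a node: T^{[s]} = {t ∈ T : t ≤ s or s ≤ t}. -/
def restrictTree (T : Set (List ℕ)) (s : List ℕ) : Set (List ℕ) :=
  {t ∈ T | t <+: s ∨ s <+: t}

/-- A branch of `p`: an element of ω^ω all of whose finite initial segments lie in `p`. -/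
def IsBranch (p : Set (List ℕ)) (x : ℕ → ℕ) : Prop :=
  ∀ k : ℕ, (List.range k).map x ∈ p

/-- A front of `p`: an antichain (w.r.t. the initial segment order) meeting every branch. -/
def IsFront (p F : Set (List ℕ)) : Prop :=
  F ⊆ p ∧ (∀ s ∈ F, ∀ t ∈ F, s <+: t → s = t) ∧
    ∀ x : ℕ → ℕ, IsBranch p x → ∃ k, (List.range k).map x ∈ F

/-- The splitting nodes of `p`. -/
def spl (p : Set (List ℕ)) : Set (List ℕ) := {s ∈ p | Splits p s}

/-- The n-th splitting nodes of `p`: splitting nodes with exactly `n` proper initial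
segments that are splitting nodes. -/
def splN (p : Set (List ℕ)) (n : ℕ) : Set (List ℕ) :=
  {s ∈ spl p | {t ∈ spl p | t <+: s ∧ t ≠ s}.ncard = n}

/-- A Laver tree with stem `s₀`: every node is comparable with `s₀`, and every node
extending `s₀` has infinitely many immediate successors in the tree. -/
def IsLaverWithStem (T : Set (List ℕ)) (s₀ : List ℕ) : Prop :=
  IsTree T ∧ s₀ ∈ T ∧ (∀ t ∈ T, t <+: s₀ ∨ s₀ <+: t) ∧
    ∀ t ∈ T, s₀ <+: t → {n : ℕ | t ++ [n] ∈ T}.Infinite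

def IsLaver (T : Set (List ℕ)) : Prop := ∃ s₀, IsLaverWithStem T s₀

/-- Superperfect (Miller) tree. -/
def IsSuperperfect (T : Set (List ℕ)) : Prop :=
  IsTree T ∧ T.Nonempty ∧
    (∀ s ∈ T, {n : ℕ | s ++ [n] ∈ T}.ncard = 1 ∨ {n : ℕ | s ++ [n] ∈ T}.Infinite) ∧
    ∀ s ∈ T, ∃ t ∈ T, s <+: t ∧ {n : ℕ | t ++ [n] ∈ T}.Infinite

/-- Rosłanowski tree. -/
def IsRoslanowski (T : Set (List ℕ)) : Prop :=
  IsTree T ∧ T.Nonempty ∧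
    (∀ s ∈ T, {n : ℕ | s ++ [n] ∈ T}.ncard = 1 ∨ ∀ n : ℕ, s ++ [n] ∈ T) ∧
    ∀ s ∈ T, ∃ t ∈ T, s <+: t ∧ ∀ n : ℕ, t ++ [n] ∈ T

namespace SacksFusionAux

/-- The proper splitting predecessors of `s` in `p`. -/
def preds (p : Set (List ℕ)) (s : List ℕ) : Set (List ℕ) := {t ∈ spl p | t <+: s ∧ t ≠ s}

lemma mem_splN {p : Set (List ℕ)} {n : ℕ} {s : List ℕ} :
    s ∈ splN p n ↔ s ∈ spl p ∧ (preds p s).ncard = n := Iff.rfl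

lemma splN_spl {p : Set (List ℕ)} {n : ℕ} {s : List ℕ} (h : s ∈ splN p n) : s ∈ spl p := h.1

lemma splN_card {p : Set (List ℕ)} {n : ℕ} {s : List ℕ} (h : s ∈ splN p n) :
    (preds p s).ncard = n := h.2

lemma splN_mk {p : Set (List ℕ)} {n : ℕ} {s : List ℕ} (h1 : s ∈ spl p)
    (h2 : (preds p s).ncard = n) : s ∈ splN p n := ⟨h1, h2⟩

lemma preds_finite (p : Set (List ℕ)) (t : List ℕ) : (preds p t).Finite := by
  apply Set.Finite.subset (t.inits.toFinset.finite_toSet)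
  intro v hv
  simpa using hv.2.1

lemma strict_trans {u v t : List ℕ} (h1 : u <+: v) (h2 : u ≠ v) (h3 : v <+: t) :
    u <+: t ∧ u ≠ t := by
  have hl : u.length < v.length :=
    lt_of_le_of_ne h1.length_le (fun e => h2 (h1.eq_of_length e))
  refine ⟨h1.trans h3, fun e => ?_⟩
  subst e
  have := h3.length_le
  omega

lemma splits_mono {q p : Set (List ℕ)} (h : q ⊆ p) {s : List ℕ} :
    Splits q s → Splits p s := fun ⟨i, j, hij, hi, hj⟩ => ⟨i, j, hij, h hi, h hj⟩

lemma spl_mono {q p : Set (List ℕ)} (h : q ⊆ p) {s : List ℕ} (hs : s ∈ spl q) : s ∈ spl p :=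
  ⟨h hs.1, splits_mono h hs.2⟩

lemma preds_mono {q p : Set (List ℕ)} (h : q ⊆ p) (t : List ℕ) : preds q t ⊆ preds p t :=
  fun v hv => ⟨spl_mono h hv.1, hv.2⟩

lemma preds_sub {p : Set (List ℕ)} {v t : List ℕ} (hv : v <+: t) (hvt : v ≠ t) :
    preds p v ⊆ preds p t := by
  rintro u ⟨hu, h1, h2⟩
  obtain ⟨h3, h4⟩ := strict_trans h1 h2 hv
  exact ⟨hu, h3, h4⟩

lemma preds_lt {p : Set (List ℕ)} {v t : List ℕ} (hv : v ∈ preds p t) :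
    (preds p v).ncard < (preds p t).ncard := by
  have hne : v ∉ preds p v := fun h => h.2.2 rfl
  exact Set.ncard_lt_ncard
    ((Set.ssubset_iff_of_subset (preds_sub hv.2.1 hv.2.2)).mpr ⟨v, hv, hne⟩)
    (preds_finite _ _)

lemma preds_card_le (p : Set (List ℕ)) (t : List ℕ) : (preds p t).ncard ≤ t.length := by
  have h1 : preds p t ⊆ (fun i => t.take i) '' ↑(Finset.range t.length) := by
    rintro v ⟨_, h1, h2⟩
    refine ⟨v.length, ?_, (List.prefix_iff_eq_take.mp h1).symm⟩
    simp only [Finset.coe_range, Set.mem_Iio]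
    exact lt_of_le_of_ne h1.length_le (fun e => h2 (h1.eq_of_length e))
  calc (preds p t).ncard
      ≤ ((fun i => t.take i) '' ↑(Finset.range t.length)).ncard :=
        Set.ncard_le_ncard h1 ((Finset.range t.length).finite_toSet.image _)
    _ ≤ (↑(Finset.range t.length) : Set ℕ).ncard :=
        Set.ncard_image_le (Finset.finite_toSet _)
    _ = t.length := by rw [Set.ncard_coe_finset, Finset.card_range]

lemma exists_pred_level {p : Set (List ℕ)} :
    ∀ k : ℕ, ∀ t ∈ spl p, (preds p t).ncard = k → ∀ n ≤ k,
      ∃ u ∈ spl p, u <+: t ∧ (preds p u).ncard = n := by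
  intro k
  induction k with
  | zero =>
    intro t ht hc n hn
    exact ⟨t, ht, List.prefix_refl t, by omega⟩
  | succ k ih =>
    intro t ht hc n hn
    rcases eq_or_lt_of_le hn with h | h
    · exact ⟨t, ht, List.prefix_refl t, by omega⟩
    · have hne : (preds p t).Nonempty := Set.nonempty_of_ncard_ne_zero (by omega)
      obtain ⟨v, hv, hmax⟩ :=
        Set.Finite.exists_maximalFor List.length (preds p t) (preds_finite p t) hne
      have heq : preds p v = preds p t \ {v} := by
        apply Set.Subset.antisymm
        · intro u hu
          exact ⟨preds_sub hv.2.1 hv.2.2 hu, hu.2.2⟩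
        · rintro u ⟨hu, hne'⟩
          simp only [Set.mem_singleton_iff] at hne'
          have huv : u <+: v := by
            rcases List.prefix_or_prefix_of_prefix hu.2.1 hv.2.1 with h' | h'
            · exact h'
            · exact absurd (h'.eq_of_length (le_antisymm h'.length_le (hmax hu h'.length_le))) (fun e => hne' e.symm)
          exact ⟨hu.1, huv, hne'⟩
      have hcv : (preds p v).ncard = k := by
        rw [heq, Set.ncard_diff_singleton_of_mem hv, hc]
        omega
      obtain ⟨u, hu1, hu2, hu3⟩ := ih v hv.1 hcv n (by omega)
      exact ⟨u, hu1, hu2.trans hv.2.1, hu3⟩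

lemma exists_high_split {p : Set (List ℕ)} (hp : IsPerfect p) {s : List ℕ} (hs : s ∈ p)
    (n : ℕ) : ∃ t ∈ spl p, s <+: t ∧ n ≤ (preds p t).ncard := by
  induction n with
  | zero =>
    obtain ⟨t, ht, hst, hsp⟩ := hp.2.2 s hs
    exact ⟨t, ⟨ht, hsp⟩, hst, Nat.zero_le _⟩
  | succ n ih =>
    obtain ⟨t, ht, hst, hn⟩ := ih
    obtain ⟨i, j, hij, hi, hj⟩ := ht.2
    obtain ⟨u, hu, htu, hsu⟩ := hp.2.2 _ hi
    have h0 : t <+: t ++ [i] := ⟨[i], rfl⟩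
    have htu1 : t <+: u := h0.trans htu
    have htu2 : t ≠ u := by
      intro e; subst e
      have h' := htu.length_le
      rw [List.length_append] at h'
      simp at h' 
    have hsub : insert t (preds p t) ⊆ preds p u := by
      rintro v (rfl | hv)
      · exact ⟨ht, htu1, htu2⟩
      · obtain ⟨h3, h4⟩ := strict_trans hv.2.1 hv.2.2 htu1
        exact ⟨hv.1, h3, h4⟩
    have hcard : (insert t (preds p t)).ncard = (preds p t).ncard + 1 :=
      Set.ncard_insert_of_notMem (fun h => h.2.2 rfl) (preds_finite p t)
    have hle := Set.ncard_le_ncard hsub (preds_finite p u)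
    exact ⟨u, ⟨hu, hsu⟩, hst.trans htu1, by omega⟩

lemma exists_level {p : Set (List ℕ)} (hp : IsPerfect p) {s : List ℕ} (hs : s ∈ p)
    (n : ℕ) : ∃ w ∈ splN p n, w <+: s ∨ s <+: w := by
  obtain ⟨t, ht, hst, hn⟩ := exists_high_split hp hs n
  obtain ⟨w, hw1, hw2, hw3⟩ := exists_pred_level _ t ht rfl n hn
  exact ⟨w, ⟨hw1, hw3⟩, List.prefix_or_prefix_of_prefix hw2 hst⟩

lemma preds_eq_of_card_eq {p q : Set (List ℕ)} (hqp : q ⊆ p) {t : List ℕ}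
    (h : (preds q t).ncard = (preds p t).ncard) : preds q t = preds p t :=
  Set.eq_of_subset_of_ncard_le (preds_mono hqp t) (le_of_eq h.symm) (preds_finite p t)

lemma level_transfer {p q : Set (List ℕ)} (hqp : q ⊆ p) {w s : List ℕ}
    (hpe : preds q w = preds p w) (hsw : s ∈ preds p w) :
    s ∈ spl q ∧ preds q s = preds p s := by
  have hsq : s ∈ preds q w := hpe ▸ hsw
  refine ⟨hsq.1, Set.Subset.antisymm (preds_mono hqp s) ?_⟩
  intro v hv
  have h1 : v ∈ preds p w := preds_sub hsw.2.1 hsw.2.2 hv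
  have hvq : v ∈ preds q w := hpe ▸ h1
  exact ⟨hvq.1, hv.2⟩

lemma splN_down {p q : Set (List ℕ)} (hp : IsPerfect p) (hq : IsPerfect q)
    (hqp : q ⊆ p) {N : ℕ} (hN : splN q N = splN p N) {n : ℕ} (hn : n ≤ N) :
    splN q n = splN p n := by
  ext s
  rw [mem_splN, mem_splN]
  constructor
  · rintro ⟨hs, hc⟩
    obtain ⟨w, hwN, hcomp⟩ := exists_level hq hs.1 N
    have hwp : w ∈ splN p N := hN ▸ hwN
    rcases hcomp with h | h
    · by_cases he : w = s
      · subst he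
        have hnN : N = n := (splN_card hwN).symm.trans hc
        exact ⟨spl_mono hqp hs, (splN_card hwp).trans hnN⟩
      · have hmem : w ∈ preds q s := ⟨splN_spl hwN, h, he⟩
        have hlt := preds_lt hmem
        rw [splN_card hwN, hc] at hlt
        omega
    · by_cases he : s = w
      · subst he
        have hnN : N = n := (splN_card hwN).symm.trans hc
        exact ⟨spl_mono hqp hs, (splN_card hwp).trans hnN⟩
      · have hsw : s ∈ preds p w := ⟨spl_mono hqp hs, h, he⟩
        have hpe := preds_eq_of_card_eq hqp
          (by rw [splN_card hwN, splN_card hwp] : (preds q w).ncard = (preds p w).ncard)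
        obtain ⟨_, heq⟩ := level_transfer hqp hpe hsw
        exact ⟨spl_mono hqp hs, by rw [← heq, hc]⟩
  · rintro ⟨hs, hc⟩
    obtain ⟨w, hwp, hcomp⟩ := exists_level hp hs.1 N
    have hwq : w ∈ splN q N := hN.symm ▸ hwp
    rcases hcomp with h | h
    · by_cases he : w = s
      · subst he
        have hnN : N = n := (splN_card hwp).symm.trans hc
        exact ⟨splN_spl hwq, (splN_card hwq).trans hnN⟩
      · have hmem : w ∈ preds p s := ⟨splN_spl hwp, h, he⟩
        have hlt := preds_lt hmem
        rw [splN_card hwp, hc] at hlt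
        omega
    · by_cases he : s = w
      · subst he
        have hnN : N = n := (splN_card hwp).symm.trans hc
        exact ⟨splN_spl hwq, (splN_card hwq).trans hnN⟩
      · have hsw : s ∈ preds p w := ⟨hs, h, he⟩
        have hpe := preds_eq_of_card_eq hqp
          (by rw [splN_card hwq, splN_card hwp] : (preds q w).ncard = (preds p w).ncard)
        obtain ⟨hsq, heq⟩ := level_transfer hqp hpe hsw
        exact ⟨hsq, by rw [heq, hc]⟩

lemma amono (a : ℕ → Set (List ℕ))
    (hstep : ∀ n, a (n + 1) ⊆ a n ∧ splN (a (n + 1)) n = splN (a n) n)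
    {k m : ℕ} (h : k ≤ m) : a m ⊆ a k := by
  induction h with
  | refl => exact subset_rfl
  | step h ih => exact fun x hx => ih ((hstep _).1 hx)

lemma splN_stable (a : ℕ → Set (List ℕ)) (ha : ∀ n, IsPerfect (a n))
    (hstep : ∀ n, a (n + 1) ⊆ a n ∧ splN (a (n + 1)) n = splN (a n) n) :
    ∀ m n, n ≤ m → splN (a m) n = splN (a n) n := by
  intro m
  induction m with
  | zero =>
    intro n hn
    have : n = 0 := Nat.le_zero.mp hn
    subst this; rfl
  | succ m ih =>
    intro n hn
    rcases Nat.lt_succ_iff_lt_or_eq.mp (Nat.lt_succ_of_le hn) with h | h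
    · have hnm : n ≤ m := Nat.lt_succ_iff.mp h
      have h1 := splN_down (ha m) (ha (m + 1)) (hstep m).1 (hstep m).2 hnm
      exact h1.trans (ih n hnm)
    · subst h; rfl

lemma memA (a : ℕ → Set (List ℕ)) (ha : ∀ n, IsPerfect (a n))
    (hstep : ∀ n, a (n + 1) ⊆ a n ∧ splN (a (n + 1)) n = splN (a n) n)
    {k : ℕ} {t : List ℕ} (h : t ∈ splN (a k) k) (m : ℕ) : t ∈ a m := by
  rcases le_total m k with hm | hm
  · exact amono a hstep hm (splN_spl h).1
  · rw [← splN_stable a ha hstep m k hm] at h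
    exact (splN_spl h).1

lemma iInterTree (a : ℕ → Set (List ℕ)) (ha : ∀ n, IsPerfect (a n)) :
    IsTree (⋂ m, a m) := fun s u hsu hu =>
  Set.mem_iInter.2 fun m => (ha m).1 s u hsu (Set.mem_iInter.1 hu m)

lemma splitsA (a : ℕ → Set (List ℕ)) (ha : ∀ n, IsPerfect (a n))
    (hstep : ∀ n, a (n + 1) ⊆ a n ∧ splN (a (n + 1)) n = splN (a n) n)
    {n : ℕ} {t : List ℕ} (ht : t ∈ splN (a n) n) :
    t ∈ (⋂ m, a m) ∧ Splits (⋂ m, a m) t := by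
  have hAt := iInterTree a ha
  have ht1 : t ∈ splN (a (n + 1)) n := by rw [(hstep n).2]; exact ht
  have key : ∀ c, t ++ [c] ∈ a (n + 1) → t ++ [c] ∈ ⋂ m, a m := by
    intro c hc
    obtain ⟨u, hu, hcu, hsu⟩ := (ha (n + 1)).2.2 _ hc
    have h0 : t <+: t ++ [c] := ⟨[c], rfl⟩
    have htu1 : t <+: u := h0.trans hcu
    have htu2 : t ≠ u := by
      intro e; subst e
      have h' := hcu.length_le
      rw [List.length_append] at h'
      simp at h'
    have hsub : insert t (preds (a (n + 1)) t) ⊆ preds (a (n + 1)) u := by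
      rintro v (rfl | hv)
      · exact ⟨splN_spl ht1, htu1, htu2⟩
      · obtain ⟨h3, h4⟩ := strict_trans hv.2.1 hv.2.2 htu1
        exact ⟨hv.1, h3, h4⟩
    have hcard : (insert t (preds (a (n + 1)) t)).ncard = n + 1 := by
      rw [Set.ncard_insert_of_notMem (fun h => h.2.2 rfl) (preds_finite _ t), splN_card ht1]
    have hle : n + 1 ≤ (preds (a (n + 1)) u).ncard := by
      have := Set.ncard_le_ncard hsub (preds_finite _ u)
      omega
    obtain ⟨w, hw1, hw2, hw3⟩ := exists_pred_level _ u ⟨hu, hsu⟩ rfl (n + 1) hle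
    have hwN : w ∈ splN (a (n + 1)) (n + 1) := splN_mk hw1 hw3
    have hwA : w ∈ ⋂ m, a m := Set.mem_iInter.2 (memA a ha hstep hwN)
    rcases List.prefix_or_prefix_of_prefix hcu hw2 with h | h
    · exact hAt _ w h hwA
    · rcases List.prefix_concat_iff.mp h with he | h'
      · rw [← he]; exact hwA
      · exfalso
        by_cases he2 : w = t
        · subst he2
          rw [splN_card ht1] at hw3
          omega
        · have hmem : w ∈ preds (a (n + 1)) t := ⟨hw1, h', he2⟩
          have hlt := preds_lt hmem
          rw [splN_card ht1, hw3] at hlt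
          omega
  obtain ⟨i, j, hij, hi, hj⟩ := (splN_spl ht1).2
  have hiA := key i hi
  have hjA := key j hj
  have htA : t ∈ ⋂ m, a m := hAt t (t ++ [i]) ⟨[i], rfl⟩ hiA
  exact ⟨htA, i, j, hij, hiA, hjA⟩

lemma forward (a : ℕ → Set (List ℕ)) (ha : ∀ n, IsPerfect (a n))
    (hstep : ∀ n, a (n + 1) ⊆ a n ∧ splN (a (n + 1)) n = splN (a n) n)
    (n : ℕ) : splN (a n) n ⊆ splN (⋂ m, a m) n := by
  intro t ht
  obtain ⟨htA, htS⟩ := splitsA a ha hstep ht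
  refine splN_mk ⟨htA, htS⟩ ?_
  have heq : preds (⋂ m, a m) t = preds (a n) t := by
    apply Set.Subset.antisymm
    · exact preds_mono (Set.iInter_subset a n) t
    · rintro v hv
      have hk := preds_lt hv
      rw [splN_card ht] at hk
      have hvk : v ∈ splN (a n) ((preds (a n) v).ncard) := splN_mk hv.1 rfl
      rw [splN_stable a ha hstep n _ (le_of_lt hk)] at hvk
      obtain ⟨hvA, hvS⟩ := splitsA a ha hstep hvk
      exact ⟨⟨hvA, hvS⟩, hv.2⟩
  rw [heq]
  exact splN_card ht

lemma backward (a : ℕ → Set (List ℕ)) (ha : ∀ n, IsPerfect (a n))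
    (hstep : ∀ n, a (n + 1) ⊆ a n ∧ splN (a (n + 1)) n = splN (a n) n)
    (n : ℕ) {t : List ℕ} (ht : t ∈ splN (⋂ m, a m) n) : t ∈ splN (a n) n := by
  have hsplm : ∀ m, t ∈ spl (a m) := fun m => spl_mono (Set.iInter_subset a m) (splN_spl ht)
  set K := (preds (a 0) t).ncard with hK
  have hle : (preds (a K) t).ncard ≤ K :=
    Set.ncard_le_ncard (preds_mono (amono a hstep (Nat.zero_le K)) t) (preds_finite _ t)
  have h2 : t ∈ splN (a ((preds (a K) t).ncard)) ((preds (a K) t).ncard) := by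
    rw [← splN_stable a ha hstep K _ hle]
    exact splN_mk (hsplm K) rfl
  have h3 := forward a ha hstep _ h2
  have hkn : (preds (a K) t).ncard = n := by
    have e1 := splN_card h3
    have e2 := splN_card ht
    omega
  rwa [hkn] at h2

end SacksFusionAux

open SacksFusionAux in
/-- fusion for Sacks forcing. If `a (n+1) ≤ₙ a n` for all `n` (i.e.
`a (n+1) ⊆ a n` and the n-th splitting levels agree), then the intersection is a perfect
tree and `aω ≤ₙ a n` for every `n`. -/
theorem sacks_fusion (a : ℕ → Set (List ℕ)) (ha : ∀ n, IsPerfect (a n))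
    (hstep : ∀ n, a (n + 1) ⊆ a n ∧ splN (a (n + 1)) n = splN (a n) n) :
    IsPerfect (⋂ n, a n) ∧
      ∀ n, (⋂ m, a m) ⊆ a n ∧ splN (⋂ m, a m) n = splN (a n) n := by
  refine ⟨⟨iInterTree a ha, ?_, ?_⟩, fun n => ⟨Set.iInter_subset a n,
    Set.Subset.antisymm (fun t ht => backward a ha hstep n ht) (forward a ha hstep n)⟩⟩
  · refine ⟨[], Set.mem_iInter.2 fun m => ?_⟩
    obtain ⟨x, hx⟩ := (ha m).2.1
    exact (ha m).1 [] x x.nil_prefix hx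
  · intro s hs
    obtain ⟨w, hw, hcomp⟩ := exists_level (ha (s.length + 1)) (Set.mem_iInter.1 hs (s.length + 1)) (s.length + 1)
    have hsw : s <+: w := by
      rcases hcomp with h | h
      · exfalso
        have h1 := preds_card_le (a (s.length + 1)) w
        have h2 := h.length_le
        rw [splN_card hw] at h1
        omega
      · exact h
    obtain ⟨hwA, hwS⟩ := splitsA a ha hstep hw
    exact ⟨w, hwA, hsw, hwS⟩
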